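/- There exist constants C > 0 and C′ > 0 such that for every integer q ≥ 2: C Ψ(q) ≤ Φ(q) ≤ C′ Ψ(q). -/

import Mathlib

open MeasureTheory

/-- `s ∈ P_m`: `s = (s₀,s₁,s₂,…)` with `s₀ ≥ 0`, `s₁ ≥ s₂ ≥ … ≥ 0`, and
`Σ_{i≥0} s_i ≤ 1`. -/
def MemPm (s : ℕ → ℝ) : Prop :=
  (∀ i, 0 ≤ s i) ∧ (∀ i, 1 ≤ i → s (i + 1) ≤ s i) ∧ Summable s ∧ ∑' i, s i ≤ 1

/-- `Φ(q) = c₀q + (c₁/2)q(q−1) + ∫_{P_m} (q s₀ + Σ_{i≥1} (q s_i − 1 + (1−s_i)^q)) ν(ds)`. -/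
noncomputable def Phi (c₀ c₁ : ℝ) (ν : Measure (ℕ → ℝ)) (q : ℕ) : ℝ :=
  c₀ * q + c₁ / 2 * q * ((q : ℝ) - 1)
    + ∫ s, ((q : ℝ) * s 0 + ∑' i : ℕ, ((q : ℝ) * s (i + 1) - 1 + (1 - s (i + 1)) ^ q)) ∂ν

/-- `Ψ(q) = c₀q + (c₁/2)q² + ∫_{P_m} (q s₀ + Σ_{i≥1} (e^{−q s_i} − 1 + q s_i)) ν(ds)`. -/
noncomputable def Psi (c₀ c₁ : ℝ) (ν : Measure (ℕ → ℝ)) (q : ℝ) : ℝ :=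
  c₀ * q + c₁ / 2 * q ^ 2
    + ∫ s, (q * s 0 + ∑' i : ℕ, (Real.exp (-(q * s (i + 1))) - 1 + q * s (i + 1))) ∂ν


lemma pow_sub_pow_le_aux (n : ℕ) {a b : ℝ} (hb : 0 ≤ b) (hba : b ≤ a) (ha : a ≤ 1) :
    a ^ n - b ^ n ≤ n * (a - b) := by
  induction n with
  | zero => simp
  | succ n ih =>
    have h1 : a ^ n ≤ 1 := pow_le_one₀ (hb.trans hba) ha
    have h2 : b ^ n ≤ 1 := pow_le_one₀ hb (hba.trans ha)
    have h3 : 0 ≤ b ^ n := pow_nonneg hb n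
    have h : a ^ (n+1) - b ^ (n+1) = a * (a ^ n - b ^ n) + (a - b) * b ^ n := by ring
    rw [h]
    push_cast
    have h4 : b ^ n ≤ a ^ n := pow_le_pow_left₀ hb hba n
    nlinarith [mul_le_mul_of_nonneg_right ha (sub_nonneg.2 h4)]

/-- Second-order upper Bonferroni: `(1-x)^q ≤ 1 - qx + q(q-1)/2 x²` on `[0,1]`. -/
lemma binom_ub (q : ℕ) {x : ℝ} (hx : 0 ≤ x) (hx1 : x ≤ 1) :
    (1 - x) ^ q ≤ 1 - q * x + q * ((q:ℝ) - 1) / 2 * x ^ 2 := by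
  induction q with
  | zero => simp
  | succ q ih =>
    have hbern : 1 - (q:ℝ) * x ≤ (1 - x) ^ q := by
      have := one_add_mul_le_pow (a := -x) (by linarith) q
      simpa [sub_eq_add_neg, mul_neg] using this
    have hpos : (0:ℝ) ≤ (1 - x) ^ q := pow_nonneg (by linarith) q
    have : (1 - x) ^ (q + 1) = (1 - x) ^ q - x * (1 - x) ^ q := by ring
    rw [this]
    have h2 : x * (1 - (q:ℝ) * x) ≤ x * (1 - x) ^ q := by
      exact mul_le_mul_of_nonneg_left hbern hx
    push_cast
    nlinarith

/-- Third-order lower Bonferroni on `[0,1]`. -/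
lemma binom_lb (q : ℕ) {x : ℝ} (hx : 0 ≤ x) (hx1 : x ≤ 1) :
    1 - q * x + q * ((q:ℝ) - 1) / 2 * x ^ 2 - q * ((q:ℝ) - 1) * ((q:ℝ) - 2) / 6 * x ^ 3
      ≤ (1 - x) ^ q := by
  induction q with
  | zero => norm_num
  | succ q ih =>
    have hub := binom_ub q hx hx1
    have : (1 - x) ^ (q + 1) = (1 - x) ^ q - x * (1 - x) ^ q := by ring
    rw [this]
    have h2 : x * (1 - x) ^ q ≤ x * (1 - (q:ℝ) * x + q * ((q:ℝ) - 1) / 2 * x ^ 2) :=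
      mul_le_mul_of_nonneg_left hub hx
    push_cast
    nlinarith

lemma gexp_nonneg {x : ℝ} (hx : 0 ≤ x) : 0 ≤ Real.exp (-x) - 1 + x := by
  have := Real.add_one_le_exp (-x); linarith

lemma gexp_le_self {x : ℝ} (hx : 0 ≤ x) : Real.exp (-x) - 1 + x ≤ x := by
  have : Real.exp (-x) ≤ 1 := Real.exp_le_one_iff.2 (by linarith)
  linarith

lemma gexp_le_sq {x : ℝ} (hx : 0 ≤ x) : Real.exp (-x) - 1 + x ≤ x ^ 2 := by
  rcases le_or_gt x 1 with h | h
  · have habs : |Real.exp (-x) - 1 - (-x)| ≤ (-x) ^ 2 :=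
      Real.abs_exp_sub_one_sub_id_le (by rw [abs_neg, abs_of_nonneg hx]; exact h)
    have := abs_le.1 habs
    nlinarith [this.2]
  · have h1 : Real.exp (-x) ≤ 1 := Real.exp_le_one_iff.2 (by linarith)
    nlinarith

lemma one_sub_inv_pow {q : ℕ} (hq : 2 ≤ q) : (1:ℝ)/8 ≤ (1 - 1/(q:ℝ)) ^ q := by
  have hq2 : (2:ℝ) ≤ (q:ℝ) := by exact_mod_cast hq
  have hqpos : (0:ℝ) < (q:ℝ) := by linarith
  have hq1 : (0:ℝ) < (q:ℝ) - 1 := by linarith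
  set y : ℝ := 1 / ((q:ℝ) - 1) with hy
  have hy0 : 0 < y := by positivity
  have hmul : (1 - 1/(q:ℝ)) * (1 + y) = 1 := by
    field_simp [hy]
    rw [hy, mul_add, mul_one, mul_one_div_cancel hq1.ne']; ring
  have hub : (1 + y) ^ q ≤ 8 := by
    have h1 : (1 + y) ^ q ≤ Real.exp y ^ q := by
      apply pow_le_pow_left₀ (by linarith) _ q
      have := Real.add_one_le_exp y; linarith
    have h2 : Real.exp y ^ q = Real.exp ((q:ℝ) * y) := by
      rw [← Real.exp_nat_mul]
    have h3 : (q:ℝ) * y ≤ 2 := by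
      rw [hy, mul_one_div, div_le_iff₀ hq1]
      nlinarith
    have h4 : Real.exp ((q:ℝ) * y) ≤ Real.exp 2 := Real.exp_le_exp.2 h3
    have h5 : Real.exp 2 < 8 := by
      have h6 := Real.exp_one_lt_d9
      have : Real.exp 2 = Real.exp 1 * Real.exp 1 := by
        rw [← Real.exp_add]; norm_num
      nlinarith [Real.exp_pos 1]
    calc (1+y)^q ≤ Real.exp y ^ q := h1
    _ = Real.exp ((q:ℝ)*y) := h2
    _ ≤ Real.exp 2 := h4
    _ ≤ 8 := h5.le
  have hpow : (1 - 1/(q:ℝ)) ^ q * (1 + y) ^ q = 1 := by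
    rw [← mul_pow, hmul, one_pow]
  have hposy : (0:ℝ) < (1 + y) ^ q := by positivity
  have : (1 - 1/(q:ℝ)) ^ q = 1 / (1 + y) ^ q := by
    field_simp at hpow ⊢
    linarith [hpow]
  rw [this]
  rw [div_le_div_iff₀ (by norm_num) hposy]
  linarith

lemma fpow_nonneg {q : ℕ} {x : ℝ} (hx : 0 ≤ x) (hx1 : x ≤ 1) :
    0 ≤ (q:ℝ) * x - 1 + (1 - x) ^ q := by
  have := one_add_mul_le_pow (a := -x) (by linarith) q
  simp only [mul_neg, ← sub_eq_add_neg] at this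
  linarith

lemma fpow_le_gexp {q : ℕ} {x : ℝ} (hx : 0 ≤ x) (hx1 : x ≤ 1) :
    (q:ℝ) * x - 1 + (1 - x) ^ q ≤ Real.exp (-((q:ℝ) * x)) - 1 + (q:ℝ) * x := by
  have h1 : (1 - x) ≤ Real.exp (-x) := by
    have := Real.add_one_le_exp (-x); linarith
  have h2 : (1 - x) ^ q ≤ Real.exp (-x) ^ q := pow_le_pow_left₀ (by linarith) h1 q
  have h3 : Real.exp (-x) ^ q = Real.exp (-((q:ℝ) * x)) := by
    rw [← Real.exp_nat_mul]; ring_nf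
  linarith [h3 ▸ h2]

lemma fpow_le_quad {q : ℕ} {x : ℝ} (hx : 0 ≤ x) (hx1 : x ≤ 1) :
    (q:ℝ) * x - 1 + (1 - x) ^ q ≤ (q:ℝ) * ((q:ℝ) - 1) / 2 * x ^ 2 := by
  have := binom_ub q hx hx1
  linarith

lemma key_pointwise {q : ℕ} (hq : 2 ≤ q) {x : ℝ} (hx : 0 ≤ x) (hx1 : x ≤ 1) :
    Real.exp (-((q:ℝ) * x)) - 1 + (q:ℝ) * x ≤ 9 * ((q:ℝ) * x - 1 + (1 - x) ^ q) := by
  have hq2 : (2:ℝ) ≤ (q:ℝ) := by exact_mod_cast hq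
  have hqx : 0 ≤ (q:ℝ) * x := by positivity
  rcases le_or_gt ((q:ℝ) * x) 1 with hA | hB
  · -- small regime: gexp ≤ (qx)^2, fpow ≥ q(q-1)/3 x^2 ≥ (qx)^2/6
    have hg := gexp_le_sq hqx
    have hlb := binom_lb q hx hx1
    have hf : (q:ℝ) * ((q:ℝ)-1)/2 * x^2 - (q:ℝ)*((q:ℝ)-1)*((q:ℝ)-2)/6 * x^3
        ≤ (q:ℝ) * x - 1 + (1 - x) ^ q := by linarith
    -- (q-2)*x ≤ q*x ≤ 1
    have hcube : (q:ℝ)*((q:ℝ)-1)*((q:ℝ)-2)/6 * x^3 ≤ (q:ℝ)*((q:ℝ)-1)/6 * x^2 := by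
      nlinarith [sq_nonneg x, mul_nonneg (mul_nonneg (by linarith : (0:ℝ) ≤ (q:ℝ)) (by linarith : (0:ℝ) ≤ (q:ℝ)-1)) (sq_nonneg x)]
    nlinarith [sq_nonneg x, mul_nonneg hx (by linarith : (0:ℝ) ≤ (q:ℝ)-2)]
  · have hg := gexp_le_self hqx
    have hf0 : (0:ℝ) ≤ (1 - x) ^ q := pow_nonneg (by linarith) q
    rcases le_or_gt ((9:ℝ)/8) ((q:ℝ) * x) with hB2 | hB1
    · -- qx ≥ 9/8 : f ≥ qx - 1 ≥ qx/9
      nlinarith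
    · -- 1 < qx < 9/8 : f x ≥ f(1/q) = (1-1/q)^q ≥ 1/8
      have hqpos : (0:ℝ) < (q:ℝ) := by linarith
      have hxq : 1/(q:ℝ) ≤ x := by
        rw [div_le_iff₀ hqpos]; nlinarith
      have hlip := pow_sub_pow_le_aux q (a := 1 - 1/(q:ℝ)) (b := 1 - x)
        (by linarith) (by linarith) (by
          have h1q : (0:ℝ) < 1/(q:ℝ) := by positivity
          linarith)
      -- a^q - b^q ≤ q*(x - 1/q) = q*x - 1
      have hq1 : (q:ℝ) * (1/(q:ℝ)) = 1 := by field_simp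
      have hfx : (1 - 1/(q:ℝ)) ^ q ≤ (q:ℝ) * x - 1 + (1 - x) ^ q := by
        have : (q:ℝ) * ((1 - 1/(q:ℝ)) - (1 - x)) = (q:ℝ) * x - 1 := by
          field_simp; ring
        linarith [this ▸ hlip]
      have h8 := one_sub_inv_pow hq
      linarith


lemma memPm_le_one {s : ℕ → ℝ} (hs : MemPm s) (i : ℕ) : s i ≤ 1 := by
  refine le_trans ?_ hs.2.2.2
  exact Summable.le_tsum hs.2.2.1 i (fun j _ => hs.1 j)

lemma memPm_sum_sq {s : ℕ → ℝ} (hs : MemPm s) : Summable (fun i => s (i+1) ^ 2) := by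
  have h1 : Summable (fun i => s (i+1)) := (summable_nat_add_iff 1).2 hs.2.2.1
  refine Summable.of_nonneg_of_le (fun i => sq_nonneg _) (fun i => ?_) h1
  nlinarith [hs.1 (i+1), memPm_le_one hs (i+1)]

section Aux
variable {q : ℕ} {s : ℕ → ℝ}

/-- the `Φ` summand family -/
noncomputable def fF (q : ℕ) (s : ℕ → ℝ) (i : ℕ) : ℝ :=
  (q:ℝ) * s (i+1) - 1 + (1 - s (i+1)) ^ q

/-- the `Ψ` summand family -/
noncomputable def fG (q : ℕ) (s : ℕ → ℝ) (i : ℕ) : ℝ :=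
  Real.exp (-((q:ℝ) * s (i+1))) - 1 + (q:ℝ) * s (i+1)

lemma summable_fF (hq : 2 ≤ q) (hs : MemPm s) : Summable (fF q s) := by
  refine Summable.of_nonneg_of_le
    (fun i => fpow_nonneg (hs.1 (i+1)) (memPm_le_one hs (i+1)))
    (fun i => ?_) ((memPm_sum_sq hs).mul_left ((q:ℝ)^2))
  refine le_trans (fpow_le_quad (hs.1 (i+1)) (memPm_le_one hs (i+1))) ?_
  have : (0:ℝ) ≤ (q:ℝ) := Nat.cast_nonneg q
  nlinarith [sq_nonneg (s (i+1))]

lemma fG_nonneg (hs : MemPm s) (i : ℕ) : 0 ≤ fG q s i :=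
  gexp_nonneg (mul_nonneg (Nat.cast_nonneg q) (hs.1 (i+1)))

lemma fG_le (hs : MemPm s) (i : ℕ) : fG q s i ≤ (q:ℝ)^2 * s (i+1) ^ 2 := by
  have h0 : 0 ≤ (q:ℝ) * s (i+1) := mul_nonneg (Nat.cast_nonneg q) (hs.1 (i+1))
  have := gexp_le_sq h0
  calc fG q s i ≤ ((q:ℝ) * s (i+1))^2 := this
  _ = (q:ℝ)^2 * s (i+1)^2 := by ring

lemma summable_fG (hs : MemPm s) : Summable (fG q s) :=
  Summable.of_nonneg_of_le (fG_nonneg hs) (fG_le hs)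
    ((memPm_sum_sq hs).mul_left ((q:ℝ)^2))

lemma tsum_fF_le_tsum_fG (hq : 2 ≤ q) (hs : MemPm s) :
    ∑' i, fF q s i ≤ ∑' i, fG q s i :=
  Summable.tsum_le_tsum (fun i => fpow_le_gexp (hs.1 (i+1)) (memPm_le_one hs (i+1)))
    (summable_fF hq hs) (summable_fG hs)

lemma tsum_fG_le (hq : 2 ≤ q) (hs : MemPm s) :
    ∑' i, fG q s i ≤ 9 * ∑' i, fF q s i := by
  rw [← tsum_mul_left]
  exact Summable.tsum_le_tsum (fun i => key_pointwise hq (hs.1 (i+1)) (memPm_le_one hs (i+1)))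
    (summable_fG hs) ((summable_fF hq hs).mul_left 9)

lemma tsum_fG_le_bound (hs : MemPm s) :
    ∑' i, fG q s i ≤ (q:ℝ)^2 * ∑' i, s (i+1) ^ 2 := by
  rw [← tsum_mul_left]
  exact Summable.tsum_le_tsum (fG_le hs) (summable_fG hs) ((memPm_sum_sq hs).mul_left _)

lemma toReal_tsum_eq {f : ℕ → ℝ} (h0 : ∀ i, 0 ≤ f i) (hsum : Summable f) :
    (∑' i, ENNReal.ofReal (f i)).toReal = ∑' i, f i := by
  rw [← ENNReal.ofReal_tsum_of_nonneg h0 hsum,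
    ENNReal.toReal_ofReal (tsum_nonneg h0)]

end Aux

section Main
variable {q : ℕ} (ν : Measure (ℕ → ℝ))

lemma meas_fF (q : ℕ) (i : ℕ) : Measurable (fun s : ℕ → ℝ => fF q s i) := by
  unfold fF
  exact (((measurable_pi_apply (i+1)).const_mul _).sub measurable_const).add
    ((measurable_const.sub (measurable_pi_apply (i+1))).pow_const q)

lemma meas_fG (q : ℕ) (i : ℕ) : Measurable (fun s : ℕ → ℝ => fG q s i) := by
  unfold fG
  exact ((Real.measurable_exp.comp ((measurable_pi_apply (i+1)).const_mul _).neg).sub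
    measurable_const).add ((measurable_pi_apply (i+1)).const_mul _)

/-- measurable surrogate -/
noncomputable def surro (h : (ℕ → ℝ) → ℕ → ℝ) (q : ℕ) (s : ℕ → ℝ) : ℝ :=
  (q:ℝ) * s 0 + (∑' i, ENNReal.ofReal (h s i)).toReal

lemma meas_surro {h : (ℕ → ℝ) → ℕ → ℝ} (hm : ∀ i, Measurable (fun s => h s i)) (q : ℕ) :
    Measurable (surro h q) := by
  exact ((measurable_pi_apply 0).const_mul _).add
    ((Measurable.ennreal_tsum (fun i => (hm i).ennreal_ofReal)).ennreal_toReal)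

end Main

noncomputable def FF (q : ℕ) (s : ℕ → ℝ) : ℝ := (q:ℝ) * s 0 + ∑' i, fF q s i
noncomputable def GG (q : ℕ) (s : ℕ → ℝ) : ℝ := (q:ℝ) * s 0 + ∑' i, fG q s i

section Pt
variable {q : ℕ} {s : ℕ → ℝ}

lemma FF_nonneg (hq : 2 ≤ q) (hs : MemPm s) : 0 ≤ FF q s :=
  add_nonneg (mul_nonneg (Nat.cast_nonneg q) (hs.1 0))
    (tsum_nonneg (fun i => fpow_nonneg (hs.1 (i+1)) (memPm_le_one hs (i+1))))

lemma FF_le_GG (hq : 2 ≤ q) (hs : MemPm s) : FF q s ≤ GG q s :=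
  add_le_add_right (tsum_fF_le_tsum_fG hq hs) _

lemma GG_le_9FF (hq : 2 ≤ q) (hs : MemPm s) : GG q s ≤ 9 * FF q s := by
  have h1 := tsum_fG_le hq hs
  have h2 : (0:ℝ) ≤ (q:ℝ) * s 0 := mul_nonneg (Nat.cast_nonneg q) (hs.1 0)
  unfold FF GG; linarith

lemma GG_le_bound (hq : 2 ≤ q) (hs : MemPm s) :
    GG q s ≤ (q:ℝ)^2 * (s 0 + ∑' i, s (i+1)^2) := by
  have h1 := tsum_fG_le_bound (q := q) hs
  have hq2 : (2:ℝ) ≤ (q:ℝ) := by exact_mod_cast hq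
  have h2 : (q:ℝ) * s 0 ≤ (q:ℝ)^2 * s 0 := by nlinarith [mul_nonneg (hs.1 0) (by nlinarith : (0:ℝ) ≤ (q:ℝ)^2 - (q:ℝ))]
  unfold GG; rw [mul_add]; linarith

lemma surro_fF_eq (hq : 2 ≤ q) (hs : MemPm s) : surro (fun s => fF q s) q s = FF q s := by
  unfold surro FF
  exact congrArg (fun r => (q:ℝ) * s 0 + r)
    (toReal_tsum_eq (fun i => fpow_nonneg (hs.1 (i+1)) (memPm_le_one hs (i+1)))
      (summable_fF hq hs))

lemma surro_fG_eq (hs : MemPm s) : surro (fun s => fG q s) q s = GG q s := by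
  unfold surro GG
  exact congrArg (fun r => (q:ℝ) * s 0 + r)
    (toReal_tsum_eq (fG_nonneg hs) (summable_fG hs))

end Pt

/-- Let `c₀, c₁ ≥ 0` and let `ν` be a measure carried on `P_m` with
`∫ (s₀ + Σ_{i≥1} s_i²) ν(ds) < ∞`.  There exist constants `C > 0` and `C′ > 0` such
that for every integer `q ≥ 2`: `C Ψ(q) ≤ Φ(q) ≤ C′ Ψ(q)`. -/
theorem Phi_Psi_comparison
    (c₀ c₁ : ℝ) (hc₀ : 0 ≤ c₀) (hc₁ : 0 ≤ c₁)
    (ν : Measure (ℕ → ℝ)) (hν : ν {s | ¬ MemPm s} = 0)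
    (hint : ∫⁻ s, ENNReal.ofReal (s 0 + ∑' i : ℕ, (s (i + 1)) ^ 2) ∂ν ≠ ⊤) :
    ∃ C > (0 : ℝ), ∃ C' > (0 : ℝ), ∀ q : ℕ, 2 ≤ q →
      C * Psi c₀ c₁ ν q ≤ Phi c₀ c₁ ν q ∧ Phi c₀ c₁ ν q ≤ C' * Psi c₀ c₁ ν q := by
  have hae : ∀ᵐ s ∂ν, MemPm s := by
    rw [MeasureTheory.ae_iff]; exact hν
  refine ⟨1/9, by norm_num, 1, by norm_num, fun q hq => ?_⟩
  have hq2 : (2:ℝ) ≤ (q:ℝ) := by exact_mod_cast hq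
  -- the dominating function
  set B : (ℕ → ℝ) → ℝ := fun s => (q:ℝ)^2 * (s 0 + ∑' i, s (i+1)^2) with hB
  have hBfin : HasFiniteIntegral B ν := by
    have h0 : 0 ≤ᶠ[ae ν] B := hae.mono fun s hs => by
      have := hs.1 0
      have h2 : (0:ℝ) ≤ ∑' i, s (i+1)^2 := tsum_nonneg (fun i => sq_nonneg _)
      positivity
    rw [hasFiniteIntegral_iff_ofReal h0]
    have heq : ∀ s : ℕ → ℝ, ENNReal.ofReal (B s)
        = ENNReal.ofReal ((q:ℝ)^2) * ENNReal.ofReal (s 0 + ∑' i, s (i+1)^2) := by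
      intro s; rw [← ENNReal.ofReal_mul (by positivity)]
    calc ∫⁻ s, ENNReal.ofReal (B s) ∂ν
        = ∫⁻ s, ENNReal.ofReal ((q:ℝ)^2) * ENNReal.ofReal (s 0 + ∑' i, s (i+1)^2) ∂ν := by
          exact lintegral_congr (fun s => heq s)
      _ = ENNReal.ofReal ((q:ℝ)^2) * ∫⁻ s, ENNReal.ofReal (s 0 + ∑' i, s (i+1)^2) ∂ν :=
          lintegral_const_mul' _ _ ENNReal.ofReal_ne_top
      _ < ⊤ := ENNReal.mul_lt_top ENNReal.ofReal_lt_top (lt_top_iff_ne_top.2 hint)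
  have hintF : Integrable (FF q) ν := by
    refine ⟨((meas_surro (fun i => meas_fF q i) q).aestronglyMeasurable).congr
      (hae.mono fun s hs => surro_fF_eq hq hs), ?_⟩
    refine hBfin.mono' (hae.mono fun s hs => ?_)
    rw [Real.norm_eq_abs, abs_of_nonneg (FF_nonneg hq hs)]
    exact le_trans (FF_le_GG hq hs) (GG_le_bound hq hs)
  have hintG : Integrable (GG q) ν := by
    refine ⟨((meas_surro (fun i => meas_fG q i) q).aestronglyMeasurable).congr
      (hae.mono fun s hs => surro_fG_eq hs), ?_⟩
    refine hBfin.mono' (hae.mono fun s hs => ?_)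
    rw [Real.norm_eq_abs, abs_of_nonneg (le_trans (FF_nonneg hq hs) (FF_le_GG hq hs))]
    exact GG_le_bound hq hs
  have hI1 : ∫ s, FF q s ∂ν ≤ ∫ s, GG q s ∂ν :=
    integral_mono_ae hintF hintG (hae.mono fun s hs => FF_le_GG hq hs)
  have hI2 : ∫ s, GG q s ∂ν ≤ 9 * ∫ s, FF q s ∂ν := by
    have := integral_mono_ae hintG (hintF.const_mul 9)
      (hae.mono fun s hs => GG_le_9FF hq hs)
    rwa [integral_const_mul] at this
  have hI0 : 0 ≤ ∫ s, FF q s ∂ν :=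
    integral_nonneg_of_ae (hae.mono fun s hs => FF_nonneg hq hs)
  have hPhi : Phi c₀ c₁ ν q
      = c₀ * q + c₁ / 2 * q * ((q : ℝ) - 1) + ∫ s, FF q s ∂ν := rfl
  have hPsi : Psi c₀ c₁ ν q
      = c₀ * q + c₁ / 2 * (q:ℝ) ^ 2 + ∫ s, GG q s ∂ν := rfl
  rw [hPhi, hPsi]
  have hc0q : 0 ≤ c₀ * q := mul_nonneg hc₀ (by linarith)
  have hc1q : 0 ≤ c₁ * (q:ℝ) * (8 * (q:ℝ) - 9) :=
    mul_nonneg (mul_nonneg hc₁ (by linarith)) (by linarith)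
  have hc1q' : 0 ≤ c₁ * (q:ℝ) := mul_nonneg hc₁ (by linarith)
  constructor
  · nlinarith
  · nlinarith
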